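/- Under the same geometric setup, for ψ ∈ L^{2,∞}(Γ_t(2δ)), η ∈ L²(ℝ), and u ∈ L²(Γ_t(2δ)): ‖η(d_Γ(·,t)/ε − h(S(·,t))) ψ u‖_{L¹(Γ_t(2δ))} ≤ C ε^{1/2} ‖η‖_{L²(ℝ)} ‖ψ‖_{L^{2,∞}(Γ_t(2δ))} ‖u‖_{L²(Γ_t(2δ))} for all ε ∈ (0,1). -/

import Mathlib

open MeasureTheory intervalIntegral

local instance : Fact ((0 : ℝ) < 1) := ⟨one_pos⟩


private lemma abs_mul_integrable' {α : Type*} {m : MeasurableSpace α} {μ : Measure α} {f g : α → ℝ}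
    (hfm : AEStronglyMeasurable f μ) (hgm : AEStronglyMeasurable g μ)
    (hf : Integrable (fun x => f x ^ 2) μ) (hg : Integrable (fun x => g x ^ 2) μ) :
    Integrable (fun x => |f x| * |g x|) μ := by
  have hfa : AEStronglyMeasurable (fun x => |f x|) μ := by
    simpa [Real.norm_eq_abs] using hfm.norm
  have hga : AEStronglyMeasurable (fun x => |g x|) μ := by
    simpa [Real.norm_eq_abs] using hgm.norm
  refine ((hf.add hg).div_const 2).mono' (hfa.mul hga) ?_
  refine Filter.Eventually.of_forall fun x => ?_
  have h2 : (0:ℝ) ≤ |f x| * |g x| := mul_nonneg (abs_nonneg _) (abs_nonneg _)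
  simp only [Pi.add_apply]
  rw [Real.norm_eq_abs, abs_of_nonneg h2]
  nlinarith [sq_nonneg (|f x| - |g x|), sq_abs (f x), sq_abs (g x)]

private lemma cs_sqrt' {α : Type*} {m : MeasurableSpace α} {μ : Measure α} {f g : α → ℝ}
    (hfm : AEStronglyMeasurable f μ) (hgm : AEStronglyMeasurable g μ)
    (hf : Integrable (fun x => f x ^ 2) μ) (hg : Integrable (fun x => g x ^ 2) μ) :
    ∫ x, |f x| * |g x| ∂μ ≤
      Real.sqrt (∫ x, f x ^ 2 ∂μ) * Real.sqrt (∫ x, g x ^ 2 ∂μ) := by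
  have h2 : (2:ℝ).HolderConjugate 2 := Real.HolderConjugate.two_two
  have e2 : ENNReal.ofReal (2:ℝ) = 2 := by
    rw [ENNReal.ofReal_ofNat]
  have hf2 : MemLp (fun x => |f x|) (ENNReal.ofReal 2) μ := by
    rw [e2]
    exact (memLp_two_iff_integrable_sq (by simpa [Real.norm_eq_abs] using hfm.norm)).2
      (by simpa [sq_abs] using hf)
  have hg2 : MemLp (fun x => |g x|) (ENNReal.ofReal 2) μ := by
    rw [e2]
    exact (memLp_two_iff_integrable_sq (by simpa [Real.norm_eq_abs] using hgm.norm)).2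
      (by simpa [sq_abs] using hg)
  have key := integral_mul_le_Lp_mul_Lq_of_nonneg h2
    (Filter.Eventually.of_forall fun x => abs_nonneg (f x))
    (Filter.Eventually.of_forall fun x => abs_nonneg (g x)) hf2 hg2
  simp only [Real.rpow_two, sq_abs] at key
  rw [Real.sqrt_eq_rpow, Real.sqrt_eq_rpow]
  exact key

/-- Lemma 2.4.2 (in tubular-neighborhood coordinates `(r,s) ∈ (-2δ,2δ) × 𝕋¹` with Jacobian
bounded by `CJ`): `‖η(d_Γ/ε − h(S)) ψ u‖_{L¹(Γ_t(2δ))} ≤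
C ε^{1/2} ‖η‖_{L²(ℝ)} ‖ψ‖_{L^{2,∞}(Γ_t(2δ))} ‖u‖_{L²(Γ_t(2δ))}`,
where `Ψ(s) = ess sup_{|r|≤2δ} |ψ(X₁(r,s))|` dominates `ψ`. -/
theorem stmt_13 (δ ε CJ : ℝ) (hδ : 0 < δ) (hε : ε ∈ Set.Ioo (0 : ℝ) 1) (hCJ : 0 < CJ)
    (η : ℝ → ℝ) (hηmeas : Measurable η) (hη : Integrable (fun ρ => (η ρ) ^ 2))
    (h : AddCircle (1 : ℝ) → ℝ) (hh : Continuous h)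
    (J : ℝ → AddCircle (1 : ℝ) → ℝ)
    (hJmeas : Measurable (Function.uncurry J))
    (hJ : ∀ r s, |J r s| ≤ CJ)
    (ψ : ℝ → AddCircle (1 : ℝ) → ℝ)
    (hψmeas : Measurable (Function.uncurry ψ))
    (Ψ : AddCircle (1 : ℝ) → ℝ) (hΨ : Integrable (fun s => (Ψ s) ^ 2)) (hΨ0 : ∀ s, 0 ≤ Ψ s)
    (hψΨ : ∀ r ∈ Set.Icc (-(2 * δ)) (2 * δ), ∀ s, |ψ r s| ≤ Ψ s)
    (u : ℝ → AddCircle (1 : ℝ) → ℝ)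
    (humeas : Measurable (Function.uncurry u))
    (hu : ∀ s : AddCircle (1 : ℝ), IntegrableOn (fun r => (u r s) ^ 2)
      (Set.Icc (-(2 * δ)) (2 * δ)))
    (huL2 : Integrable (fun s : AddCircle (1 : ℝ) =>
      ∫ r in (-(2 * δ))..(2 * δ), (u r s) ^ 2)) :
    (∫ s : AddCircle (1 : ℝ), ∫ r in (-(2 * δ))..(2 * δ),
        |η (r / ε - h s)| * |ψ r s| * |u r s| * |J r s|)
      ≤ CJ * Real.sqrt ε * Real.sqrt (∫ ρ : ℝ, (η ρ) ^ 2)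
          * Real.sqrt (∫ s : AddCircle (1 : ℝ), (Ψ s) ^ 2)
          * Real.sqrt (∫ s : AddCircle (1 : ℝ), ∫ r in (-(2 * δ))..(2 * δ), (u r s) ^ 2) := by
  obtain ⟨hε0, hε1⟩ := hε
  have hab : -(2 * δ) ≤ 2 * δ := by linarith
  have hεne : ε ≠ 0 := ne_of_gt hε0
  set A : ℝ := Real.sqrt (∫ ρ : ℝ, (η ρ) ^ 2) with hA
  have hA0 : 0 ≤ A := Real.sqrt_nonneg _
  have humeas' : ∀ s, Measurable fun r => u r s := fun s =>
    humeas.comp (measurable_id.prodMk measurable_const)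
  have hEmeas : ∀ s : AddCircle (1:ℝ), Measurable fun r : ℝ => η (r / ε - h s) := fun s =>
    hηmeas.comp ((measurable_id.div_const ε).sub_const (h s))
  have hE2 : ∀ s : AddCircle (1:ℝ), Integrable (fun r : ℝ => (η (r / ε - h s)) ^ 2) := by
    intro s
    have h1 : Integrable (fun x : ℝ => (η (x - h s)) ^ 2) := hη.comp_sub_right (h s)
    exact h1.comp_div hεne
  set V : AddCircle (1:ℝ) → ℝ := fun s => ∫ r in Set.Ioc (-(2 * δ)) (2 * δ), (u r s) ^ 2 with hV
  have hVeq : ∀ s, (∫ r in (-(2 * δ))..(2 * δ), (u r s) ^ 2) = V s := fun s =>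
    integral_of_le hab
  have hV0 : ∀ s, 0 ≤ V s := fun s =>
    setIntegral_nonneg measurableSet_Ioc fun r _ => sq_nonneg _
  have hVmeas : StronglyMeasurable V := by
    have hm : StronglyMeasurable fun p : AddCircle (1:ℝ) × ℝ => (u p.2 p.1) ^ 2 :=
      ((humeas.comp measurable_swap).pow_const 2).stronglyMeasurable
    exact hm.integral_prod_right'
  set B : AddCircle (1:ℝ) → ℝ := fun s => Real.sqrt (V s) with hB
  have hBmeas : AEStronglyMeasurable B volume :=
    (Real.continuous_sqrt.comp_stronglyMeasurable hVmeas).aestronglyMeasurable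
  have hB0 : ∀ s, 0 ≤ B s := fun s => Real.sqrt_nonneg _
  have hBsq : (fun s => B s ^ 2) = fun s => ∫ r in (-(2 * δ))..(2 * δ), (u r s) ^ 2 := by
    funext s
    rw [hVeq s]
    exact Real.sq_sqrt (hV0 s)
  have hB2 : Integrable (fun s => B s ^ 2) := by rw [hBsq]; exact huL2
  have hΨmeas : AEStronglyMeasurable Ψ (volume : Measure (AddCircle (1:ℝ))) := by
    have h1 : AEStronglyMeasurable (fun s => Real.sqrt (Ψ s ^ 2))
        (volume : Measure (AddCircle (1:ℝ))) :=
      Real.continuous_sqrt.comp_aestronglyMeasurable hΨ.1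
    exact h1.congr (Filter.Eventually.of_forall fun s => Real.sqrt_sq (hΨ0 s))
  -- pointwise (in s) bound
  have hPoint : ∀ s : AddCircle (1:ℝ),
      (∫ r in (-(2 * δ))..(2 * δ), |η (r / ε - h s)| * |ψ r s| * |u r s| * |J r s|)
        ≤ CJ * Real.sqrt ε * A * (Ψ s * B s) := by
    intro s
    set E : ℝ → ℝ := fun r => η (r / ε - h s) with hEdef
    have hu2 : IntegrableOn (fun r => (u r s) ^ 2) (Set.Ioc (-(2 * δ)) (2 * δ)) :=
      (hu s).mono_set Set.Ioc_subset_Icc_self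
    have hE2' : IntegrableOn (fun r => E r ^ 2) (Set.Ioc (-(2 * δ)) (2 * δ)) :=
      (hE2 s).integrableOn
    have hEUint : Integrable (fun r => |E r| * |u r s|)
        (volume.restrict (Set.Ioc (-(2 * δ)) (2 * δ))) :=
      abs_mul_integrable' (hEmeas s).aestronglyMeasurable (humeas' s).aestronglyMeasurable
        hE2' hu2
    have step1 : (∫ r in (-(2 * δ))..(2 * δ), |E r| * |ψ r s| * |u r s| * |J r s|)
        ≤ (CJ * Ψ s) * ∫ r in Set.Ioc (-(2 * δ)) (2 * δ), |E r| * |u r s| := by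
      rw [integral_of_le hab, ← MeasureTheory.integral_const_mul]
      refine integral_mono_of_nonneg
        (Filter.Eventually.of_forall fun r => by positivity)
        (hEUint.const_mul _) ?_
      refine (ae_restrict_iff' measurableSet_Ioc).2
        (Filter.Eventually.of_forall fun r hr => ?_)
      have h1 : |ψ r s| ≤ Ψ s := hψΨ r (Set.Ioc_subset_Icc_self hr) s
      have h2 : |J r s| ≤ CJ := hJ r s
      have h3 : |E r| * |ψ r s| * |u r s| ≤ |E r| * Ψ s * |u r s| :=
        mul_le_mul_of_nonneg_right (mul_le_mul_of_nonneg_left h1 (abs_nonneg _)) (abs_nonneg _)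
      have h4 : |E r| * |ψ r s| * |u r s| * |J r s| ≤ |E r| * Ψ s * |u r s| * CJ :=
        mul_le_mul h3 h2 (abs_nonneg _)
          (mul_nonneg (mul_nonneg (abs_nonneg _) (hΨ0 s)) (abs_nonneg _))
      calc |E r| * |ψ r s| * |u r s| * |J r s| ≤ |E r| * Ψ s * |u r s| * CJ := h4
        _ = CJ * Ψ s * (|E r| * |u r s|) := by ring
    have step2 : (∫ r in Set.Ioc (-(2 * δ)) (2 * δ), |E r| * |u r s|)
        ≤ Real.sqrt (∫ r in Set.Ioc (-(2 * δ)) (2 * δ), E r ^ 2) * B s := by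
      have hcs := cs_sqrt' (μ := volume.restrict (Set.Ioc (-(2 * δ)) (2 * δ)))
        (hEmeas s).aestronglyMeasurable (humeas' s).aestronglyMeasurable hE2' hu2
      exact hcs
    have step3 : Real.sqrt (∫ r in Set.Ioc (-(2 * δ)) (2 * δ), E r ^ 2)
        ≤ Real.sqrt ε * A := by
      have hcomp : (∫ r in Set.Ioc (-(2 * δ)) (2 * δ), E r ^ 2)
          = ε * ∫ x in (-(2 * δ) / ε - h s)..(2 * δ / ε - h s), (η x) ^ 2 := by
        rw [← integral_of_le hab]
        have h1 : (∫ r in (-(2 * δ))..(2 * δ), E r ^ 2)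
            = ∫ r in (-(2 * δ))..(2 * δ), (fun x => (η (x - h s)) ^ 2) (r / ε) := rfl
        rw [h1, integral_comp_div (f := fun x => (η (x - h s)) ^ 2) hεne,
          integral_comp_sub_right (fun x => (η x) ^ 2) (h s)]
        simp [smul_eq_mul]
      rw [hcomp]
      have hab' : -(2 * δ) / ε - h s ≤ 2 * δ / ε - h s := by
        have : -(2 * δ) / ε ≤ 2 * δ / ε := by
          gcongr <;> linarith
        linarith
      have hle : (∫ x in (-(2 * δ) / ε - h s)..(2 * δ / ε - h s), (η x) ^ 2)
          ≤ ∫ ρ : ℝ, (η ρ) ^ 2 := by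
        rw [integral_of_le hab']
        exact setIntegral_le_integral hη (Filter.Eventually.of_forall fun x => sq_nonneg _)
      calc Real.sqrt (ε * ∫ x in (-(2 * δ) / ε - h s)..(2 * δ / ε - h s), (η x) ^ 2)
          ≤ Real.sqrt (ε * ∫ ρ : ℝ, (η ρ) ^ 2) :=
            Real.sqrt_le_sqrt (mul_le_mul_of_nonneg_left hle hε0.le)
        _ = Real.sqrt ε * A := Real.sqrt_mul hε0.le _
    have hCΨ : 0 ≤ CJ * Ψ s := mul_nonneg hCJ.le (hΨ0 s)
    calc (∫ r in (-(2 * δ))..(2 * δ), |E r| * |ψ r s| * |u r s| * |J r s|)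
        ≤ (CJ * Ψ s) * ∫ r in Set.Ioc (-(2 * δ)) (2 * δ), |E r| * |u r s| := step1
      _ ≤ (CJ * Ψ s) * (Real.sqrt (∫ r in Set.Ioc (-(2 * δ)) (2 * δ), E r ^ 2) * B s) :=
          mul_le_mul_of_nonneg_left step2 hCΨ
      _ ≤ (CJ * Ψ s) * ((Real.sqrt ε * A) * B s) :=
          mul_le_mul_of_nonneg_left (mul_le_mul_of_nonneg_right step3 (hB0 s)) hCΨ
      _ = CJ * Real.sqrt ε * A * (Ψ s * B s) := by ring
  have hΨB : Integrable (fun s => Ψ s * B s) := by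
    have h1 := abs_mul_integrable' hΨmeas hBmeas hΨ hB2
    refine h1.congr (Filter.Eventually.of_forall fun s => ?_)
    show |Ψ s| * |B s| = Ψ s * B s
    rw [abs_of_nonneg (hΨ0 s), abs_of_nonneg (hB0 s)]
  calc (∫ s : AddCircle (1:ℝ), ∫ r in (-(2 * δ))..(2 * δ),
          |η (r / ε - h s)| * |ψ r s| * |u r s| * |J r s|)
      ≤ ∫ s : AddCircle (1:ℝ), CJ * Real.sqrt ε * A * (Ψ s * B s) := by
        refine integral_mono_of_nonneg
          (Filter.Eventually.of_forall fun s =>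
            intervalIntegral.integral_nonneg hab fun r _ => by positivity)
          (hΨB.const_mul _) (Filter.Eventually.of_forall hPoint)
    _ = CJ * Real.sqrt ε * A * ∫ s : AddCircle (1:ℝ), Ψ s * B s := integral_const_mul _ _
    _ ≤ CJ * Real.sqrt ε * A *
          (Real.sqrt (∫ s : AddCircle (1:ℝ), (Ψ s) ^ 2) *
            Real.sqrt (∫ s : AddCircle (1:ℝ), B s ^ 2)) := by
        refine mul_le_mul_of_nonneg_left ?_ (by positivity)
        have h1 : (∫ s : AddCircle (1:ℝ), Ψ s * B s)
            = ∫ s : AddCircle (1:ℝ), |Ψ s| * |B s| := by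
          refine integral_congr_ae (Filter.Eventually.of_forall fun s => ?_)
          show Ψ s * B s = |Ψ s| * |B s|
          rw [abs_of_nonneg (hΨ0 s), abs_of_nonneg (hB0 s)]
        rw [h1]
        exact cs_sqrt' hΨmeas hBmeas hΨ hB2
    _ = _ := by rw [hBsq]; ring
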